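/- Fix K ∈ ℕ with K ≥ 1, N = 2K+1, L > 0, ε ∈ ℝ, M > 0, a > 0, b, c ∈ ℝ, and let u¹, u⁰, v be real-valued grid functions such that f := a·v + b·u¹ + c·u⁰ has zero mean. Define G_N(z) = (1/(2Ma))·‖a·z + b·u¹ + c·u⁰‖₋₁,N² + E_N(z) for real-valued grid functions z, and μ_N(v) = v³ + (1−ε)v + 2Δ_N v + Δ_N² v. Then for every real-valued grid function w, the function s ↦ G_N(v + s·w) (s ∈ ℝ) is differentiable at 0 with derivative Re( ( (1/M)·((−Δ_N)⁻¹ f) + μ_N(v), w )_N ). -/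

import Mathlib

open Complex

noncomputable section

/-- A grid function on the `N × N` grid with `N = 2K+1`. -/
abbrev GridFn (K : ℕ) := Fin (2 * K + 1) × Fin (2 * K + 1) → ℂ

/-- A grid function is real-valued if all its values are real. -/
def RealValued {K : ℕ} (w : GridFn K) : Prop := ∀ m, (w m).im = 0

/-- A grid function has zero (discrete) mean if its values sum to zero. -/
def ZeroMean {K : ℕ} (w : GridFn K) : Prop := (∑ s, w s) = 0

/-- The discrete Fourier coefficient `ĉ_w(r) = N⁻² ∑_s w(s) exp(−2πi(r₁s₁+r₂s₂)/N)`. -/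
def dft (K : ℕ) (w : GridFn K) (r : ℤ × ℤ) : ℂ :=
  ((2 * K + 1 : ℂ) ^ 2)⁻¹ *
    ∑ s : Fin (2 * K + 1) × Fin (2 * K + 1),
      w s * Complex.exp (-(2 * Real.pi * Complex.I) *
        ((r.1 : ℂ) * ((s.1 : ℕ) : ℂ) + (r.2 : ℂ) * ((s.2 : ℕ) : ℂ)) / (2 * K + 1))

/-- The set of nonzero frequencies `{r ∈ ℤ² : −K ≤ r₁,r₂ ≤ K} \ {0}`. -/
def freqs (K : ℕ) : Finset (ℤ × ℤ) :=
  (Finset.Icc (-(K : ℤ)) K ×ˢ Finset.Icc (-(K : ℤ)) K).erase (0, 0)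

/-- The spectral operator `(−Δ_N)^α` for `α ∈ {−1, 1, 2}` (defined for any `α : ℤ`):
`((−Δ_N)^α w)(m) = ∑_{r ≠ 0} (4π²|r|²/L²)^α ĉ_w(r) exp(2πi r·m/N)`. -/
def specOp (K : ℕ) (L : ℝ) (α : ℤ) (w : GridFn K) : GridFn K := fun m =>
  ∑ r ∈ freqs K,
    (((4 * Real.pi ^ 2 * ((r.1 : ℝ) ^ 2 + (r.2 : ℝ) ^ 2) / L ^ 2 : ℝ) : ℂ)) ^ α *
      dft K w r *
      Complex.exp ((2 * Real.pi * Complex.I) *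
        ((r.1 : ℂ) * ((m.1 : ℕ) : ℂ) + (r.2 : ℂ) * ((m.2 : ℕ) : ℂ)) / (2 * K + 1))

/-- The discrete Laplacian `Δ_N w = −((−Δ_N)¹ w)`. -/
def lapN (K : ℕ) (L : ℝ) (w : GridFn K) : GridFn K := fun m => -(specOp K L 1 w m)

/-- The discrete biharmonic operator `Δ_N² w = (−Δ_N)² w`. -/
def bilapN (K : ℕ) (L : ℝ) (w : GridFn K) : GridFn K := specOp K L 2 w

/-- The discrete inverse (negative) Laplacian `(−Δ_N)⁻¹`. -/
def invNegLapN (K : ℕ) (L : ℝ) (w : GridFn K) : GridFn K := specOp K L (-1) w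

/-- The discrete inner product `(u,v)_N = h² ∑_s u(s) conj(v(s))` with `h = L/N`. -/
def ipN (K : ℕ) (L : ℝ) (u v : GridFn K) : ℂ :=
  (((L / (2 * K + 1)) ^ 2 : ℝ) : ℂ) * ∑ s, u s * (starRingEnd ℂ) (v s)

/-- The spectral partial derivative `D₁` (in the first coordinate direction). -/
def D1 (K : ℕ) (L : ℝ) (w : GridFn K) : GridFn K := fun m =>
  ∑ r ∈ Finset.Icc (-(K : ℤ)) K ×ˢ Finset.Icc (-(K : ℤ)) K,
    (2 * Real.pi * Complex.I * (r.1 : ℂ) / (L : ℂ)) * dft K w r *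
      Complex.exp ((2 * Real.pi * Complex.I) *
        ((r.1 : ℂ) * ((m.1 : ℕ) : ℂ) + (r.2 : ℂ) * ((m.2 : ℕ) : ℂ)) / (2 * K + 1))

/-- The spectral partial derivative `D₂` (in the second coordinate direction). -/
def D2 (K : ℕ) (L : ℝ) (w : GridFn K) : GridFn K := fun m =>
  ∑ r ∈ Finset.Icc (-(K : ℤ)) K ×ˢ Finset.Icc (-(K : ℤ)) K,
    (2 * Real.pi * Complex.I * (r.2 : ℂ) / (L : ℂ)) * dft K w r *
      Complex.exp ((2 * Real.pi * Complex.I) *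
        ((r.1 : ℂ) * ((m.1 : ℕ) : ℂ) + (r.2 : ℂ) * ((m.2 : ℕ) : ℂ)) / (2 * K + 1))

/-- The discrete squared gradient `|∇_N w|²(m) = |(D₁w)(m)|² + |(D₂w)(m)|²`. -/
def gradSqN (K : ℕ) (L : ℝ) (w : GridFn K) (m : Fin (2 * K + 1) × Fin (2 * K + 1)) : ℝ :=
  ‖D1 K L w m‖ ^ 2 + ‖D2 K L w m‖ ^ 2

/-- The discrete PFC energy
`E_N(z) = h² ∑_m [¼z(m)⁴ + ((1−ε)/2)z(m)² − |∇_N z|²(m) + ½|(Δ_N z)(m)|²]`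
of a real-valued grid function `z`. -/
def EN (K : ℕ) (L ε : ℝ) (z : GridFn K) : ℝ :=
  (L / (2 * K + 1)) ^ 2 *
    ∑ m, ((1/4) * (z m).re ^ 4 + ((1 - ε) / 2) * (z m).re ^ 2
      - gradSqN K L z m + (1/2) * ‖lapN K L z m‖ ^ 2)

/-- The squared discrete negative norm `‖w‖₋₁,N² = Re((−Δ_N)⁻¹w, w)_N`. -/
def negNormSq (K : ℕ) (L : ℝ) (w : GridFn K) : ℝ :=
  (ipN K L (invNegLapN K L w) w).re

/-- The discrete PFC chemical potential `μ_N(v) = v³ + (1−ε)v + 2Δ_N v + Δ_N² v`. -/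
def muN (K : ℕ) (L ε : ℝ) (v : GridFn K) : GridFn K := fun m =>
  (v m) ^ 3 + ((1 - ε : ℝ) : ℂ) * v m + 2 * lapN K L v m + bilapN K L v m

/-- The objective `G_N(z) = (1/(2Ma))‖a z + b u¹ + c u⁰‖₋₁,N² + E_N(z)`. -/
def GN (K : ℕ) (L ε M a b c : ℝ) (u1 u0 : GridFn K) (z : GridFn K) : ℝ :=
  (1 / (2 * M * a)) *
    negNormSq K L (fun m => (a : ℂ) * z m + (b : ℂ) * u1 m + (c : ℂ) * u0 m)
    + EN K L ε z


def eker (K : ℕ) (r : ℤ × ℤ) (m : Fin (2*K+1) × Fin (2*K+1)) : ℂ :=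
  Complex.exp ((2 * Real.pi * Complex.I) *
        ((r.1 : ℂ) * ((m.1 : ℕ) : ℂ) + (r.2 : ℂ) * ((m.2 : ℕ) : ℂ)) / (2 * K + 1))

lemma conj_eker (K : ℕ) (r : ℤ × ℤ) (m : Fin (2*K+1) × Fin (2*K+1)) :
    (starRingEnd ℂ) (eker K r m) = Complex.exp (-(2 * Real.pi * Complex.I) *
        ((r.1 : ℂ) * ((m.1 : ℕ) : ℂ) + (r.2 : ℂ) * ((m.2 : ℕ) : ℂ)) / (2 * K + 1)) := by
  rw [eker, ← Complex.exp_conj]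
  congr 1
  simp [map_mul, map_div₀, map_add, Complex.conj_I, Complex.conj_ofNat]

lemma sum_exp_1d (K : ℕ) (k : ℤ) :
    ∑ s : Fin (2*K+1), Complex.exp ((2 * Real.pi * Complex.I) * (k:ℂ) * ((s:ℕ):ℂ) / (2*K+1)) =
      if ((2*K+1 : ℤ)) ∣ k then ((2*K+1 : ℕ) : ℂ) else 0 := by
  have h2 : ((2:ℂ) * K + 1) ≠ 0 := by
    have h0 : (2*(K:ℂ)+1) = ((2*K+1 : ℕ) : ℂ) := by push_cast; ring
    rw [h0]; exact Nat.cast_ne_zero.mpr (by omega)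
  set ζ : ℂ := Complex.exp ((2 * Real.pi * Complex.I) * (k:ℂ) / (2*K+1)) with hζ
  have hterm : ∀ s : Fin (2*K+1),
      Complex.exp ((2 * Real.pi * Complex.I) * (k:ℂ) * ((s:ℕ):ℂ) / (2*K+1)) = ζ ^ (s:ℕ) := by
    intro s
    rw [hζ, ← Complex.exp_nat_mul]
    congr 1
    ring
  rw [Finset.sum_congr rfl (fun s _ => hterm s), Fin.sum_univ_eq_sum_range (fun i => ζ ^ i)]
  have hζN : ζ ^ (2*K+1) = 1 := by
    rw [hζ, ← Complex.exp_nat_mul]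
    have h3 : ((2*K+1:ℕ):ℂ) * ((2 * Real.pi * Complex.I) * (k:ℂ) / (2*(K:ℂ)+1)) = (k:ℂ) * (2 * Real.pi * Complex.I) := by
      push_cast
      field_simp
    rw [h3]
    exact_mod_cast Complex.exp_int_mul_two_pi_mul_I k
  by_cases hdvd : ((2*K+1 : ℤ)) ∣ k
  · rw [if_pos hdvd]
    obtain ⟨t, ht⟩ := hdvd
    have hζ1 : ζ = 1 := by
      rw [hζ, ht]
      have h4 : (2 * Real.pi * Complex.I) * ((((2*K+1:ℤ) * t : ℤ)):ℂ) / (2*(K:ℂ)+1) = (t:ℂ) * (2 * Real.pi * Complex.I) := by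
        push_cast
        field_simp
      rw [h4]
      exact_mod_cast Complex.exp_int_mul_two_pi_mul_I t
    simp [hζ1]
  · rw [if_neg hdvd]
    have hζne : ζ ≠ 1 := by
      intro h1
      rw [hζ, Complex.exp_eq_one_iff] at h1
      obtain ⟨n, hn⟩ := h1
      apply hdvd
      refine ⟨n, ?_⟩
      have : (k:ℂ) = (2*(K:ℂ)+1) * n := by
        have h2pi : (2 * Real.pi * Complex.I) ≠ 0 := by
          simp [Real.pi_ne_zero, Complex.I_ne_zero]
        field_simp at hn
        -- hn : 2 * π * I * k = n * (2 * π * I) * (2K+1)  (roughly)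
        have := hn
        apply mul_left_cancel₀ h2pi
        linear_combination (2 * Real.pi * Complex.I) * hn
      exact_mod_cast this
    rw [geom_sum_eq hζne, hζN]
    simp

lemma dvd_iff_eq_int (K : ℕ) {x y : ℤ} (hx : x ∈ Finset.Icc (-(K:ℤ)) K)
    (hy : y ∈ Finset.Icc (-(K:ℤ)) K) : ((2*K+1 : ℤ)) ∣ (x - y) ↔ x = y := by
  simp only [Finset.mem_Icc] at hx hy
  constructor
  · rintro ⟨t, ht⟩
    rcases lt_trichotomy t 0 with h | h | h
    · nlinarith [ht, hx.1, hx.2, hy.1, hy.2]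
    · subst h; simp at ht; omega
    · nlinarith [ht, hx.1, hx.2, hy.1, hy.2]
  · rintro rfl; simp

lemma sum_eker_mul_conj (K : ℕ) {r r' : ℤ × ℤ}
    (hr : r ∈ Finset.Icc (-(K:ℤ)) K ×ˢ Finset.Icc (-(K:ℤ)) K)
    (hr' : r' ∈ Finset.Icc (-(K:ℤ)) K ×ˢ Finset.Icc (-(K:ℤ)) K) :
    ∑ m : Fin (2*K+1) × Fin (2*K+1), eker K r m * (starRingEnd ℂ) (eker K r' m) =
      if r = r' then (((2*K+1:ℕ) : ℂ)) ^ 2 else 0 := by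
  simp only [Finset.mem_product] at hr hr'
  have key : ∀ m : Fin (2*K+1) × Fin (2*K+1),
      eker K r m * (starRingEnd ℂ) (eker K r' m) =
      Complex.exp ((2 * Real.pi * Complex.I) * ((r.1 - r'.1 : ℤ):ℂ) * ((m.1:ℕ):ℂ) / (2*K+1)) *
      Complex.exp ((2 * Real.pi * Complex.I) * ((r.2 - r'.2 : ℤ):ℂ) * ((m.2:ℕ):ℂ) / (2*K+1)) := by
    intro m
    rw [conj_eker, eker, ← Complex.exp_add, ← Complex.exp_add]
    congr 1
    push_cast
    ring
  rw [Finset.sum_congr rfl (fun m _ => key m), Fintype.sum_prod_type]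
  dsimp only
  rw [← Finset.sum_mul_sum, sum_exp_1d, sum_exp_1d]
  simp only [dvd_iff_eq_int K hr.1 hr'.1, dvd_iff_eq_int K hr.2 hr'.2]
  by_cases h1 : r.1 = r'.1 <;> by_cases h2 : r.2 = r'.2 <;>
    simp [h1, h2, Prod.ext_iff, sq]

lemma sum_mul_dftker (K : ℕ) (w : GridFn K) (r : ℤ × ℤ) :
    ∑ s : Fin (2*K+1) × Fin (2*K+1),
      w s * Complex.exp (-(2 * Real.pi * Complex.I) *
        ((r.1 : ℂ) * ((s.1 : ℕ) : ℂ) + (r.2 : ℂ) * ((s.2 : ℕ) : ℂ)) / (2 * K + 1))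
      = (2 * (K:ℂ) + 1) ^ 2 * dft K w r := by
  have hne : ((2 * K + 1 : ℂ)) ^ 2 ≠ 0 := by
    have h0 : ((2 * K + 1 : ℂ)) = ((2*K+1 : ℕ) : ℂ) := by push_cast; ring
    rw [h0]
    exact pow_ne_zero _ (Nat.cast_ne_zero.mpr (by omega))
  rw [dft, ← mul_assoc, mul_inv_cancel₀ hne, one_mul]

lemma sum_eker_mul_conj_fn (K : ℕ) (w : GridFn K) (r : ℤ × ℤ) :
    ∑ m : Fin (2*K+1) × Fin (2*K+1), eker K r m * (starRingEnd ℂ) (w m)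
      = (2 * (K:ℂ) + 1) ^ 2 * (starRingEnd ℂ) (dft K w r) := by
  have h1 : ∀ m : Fin (2*K+1) × Fin (2*K+1), eker K r m * (starRingEnd ℂ) (w m)
      = (starRingEnd ℂ) (w m * Complex.exp (-(2 * Real.pi * Complex.I) *
        ((r.1 : ℂ) * ((m.1 : ℕ) : ℂ) + (r.2 : ℂ) * ((m.2 : ℕ) : ℂ)) / (2 * K + 1))) := by
    intro m
    rw [map_mul, ← conj_eker, Complex.conj_conj]
    ring
  rw [Finset.sum_congr rfl fun m _ => h1 m, ← map_sum, sum_mul_dftker, map_mul]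
  congr 1
  simp [map_pow, map_add, map_mul, Complex.conj_ofNat, Complex.conj_natCast]

lemma sum_spec_mul_conj (K : ℕ) (S : Finset (ℤ × ℤ)) (c : ℤ × ℤ → ℂ) (w : GridFn K) :
    ∑ m : Fin (2*K+1) × Fin (2*K+1),
        (∑ r ∈ S, c r * eker K r m) * (starRingEnd ℂ) (w m)
      = (2 * (K:ℂ) + 1) ^ 2 * ∑ r ∈ S, c r * (starRingEnd ℂ) (dft K w r) := by
  have h1 : ∀ m : Fin (2*K+1) × Fin (2*K+1),
      (∑ r ∈ S, c r * eker K r m) * (starRingEnd ℂ) (w m)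
        = ∑ r ∈ S, c r * (eker K r m * (starRingEnd ℂ) (w m)) := by
    intro m
    rw [Finset.sum_mul]
    exact Finset.sum_congr rfl fun r _ => by ring
  rw [Finset.sum_congr rfl fun m _ => h1 m, Finset.sum_comm]
  rw [Finset.mul_sum]
  refine Finset.sum_congr rfl fun r _ => ?_
  rw [← Finset.mul_sum, sum_eker_mul_conj_fn]
  ring

lemma sum_spec_mul_conj_spec (K : ℕ) (S : Finset (ℤ × ℤ))
    (hS : S ⊆ Finset.Icc (-(K:ℤ)) K ×ˢ Finset.Icc (-(K:ℤ)) K) (c d : ℤ × ℤ → ℂ) :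
    ∑ m : Fin (2*K+1) × Fin (2*K+1),
        (∑ r ∈ S, c r * eker K r m) * (starRingEnd ℂ) (∑ r ∈ S, d r * eker K r m)
      = (2 * (K:ℂ) + 1) ^ 2 * ∑ r ∈ S, c r * (starRingEnd ℂ) (d r) := by
  have h1 : ∀ m : Fin (2*K+1) × Fin (2*K+1),
      (∑ r ∈ S, c r * eker K r m) * (starRingEnd ℂ) (∑ r ∈ S, d r * eker K r m)
        = ∑ r ∈ S, ∑ r' ∈ S, (c r * (starRingEnd ℂ) (d r')) *
            (eker K r m * (starRingEnd ℂ) (eker K r' m)) := by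
    intro m
    rw [map_sum, Finset.sum_mul_sum]
    refine Finset.sum_congr rfl fun r _ => Finset.sum_congr rfl fun r' _ => ?_
    rw [map_mul]
    ring
  rw [Finset.sum_congr rfl fun m _ => h1 m, Finset.sum_comm]
  have hN2 : (((2*K+1:ℕ)) : ℂ) ^ 2 = (2 * (K:ℂ) + 1) ^ 2 := by push_cast; ring
  rw [Finset.mul_sum]
  refine Finset.sum_congr rfl fun r hr => ?_
  rw [Finset.sum_comm]
  have h2 : ∀ r' ∈ S, ∑ m : Fin (2*K+1) × Fin (2*K+1),
      (c r * (starRingEnd ℂ) (d r')) * (eker K r m * (starRingEnd ℂ) (eker K r' m))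
      = (c r * (starRingEnd ℂ) (d r')) * (if r = r' then (2 * (K:ℂ) + 1) ^ 2 else 0) := by
    intro r' hr'
    rw [← Finset.mul_sum, sum_eker_mul_conj K (hS hr) (hS hr'), hN2]
  rw [Finset.sum_congr rfl h2]
  simp only [mul_ite, mul_zero]
  rw [Finset.sum_ite_eq, if_pos hr]
  ring

def lam (L : ℝ) (r : ℤ × ℤ) : ℝ := 4 * Real.pi ^ 2 * ((r.1 : ℝ) ^ 2 + (r.2 : ℝ) ^ 2) / L ^ 2

lemma specOp_apply (K : ℕ) (L : ℝ) (α : ℤ) (w : GridFn K) (m : Fin (2*K+1) × Fin (2*K+1)) :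
    specOp K L α w m = ∑ r ∈ freqs K, (((lam L r : ℝ) : ℂ)) ^ α * dft K w r * eker K r m := rfl

lemma D1_apply (K : ℕ) (L : ℝ) (w : GridFn K) (m : Fin (2*K+1) × Fin (2*K+1)) :
    D1 K L w m = ∑ r ∈ Finset.Icc (-(K : ℤ)) K ×ˢ Finset.Icc (-(K : ℤ)) K,
      (2 * Real.pi * Complex.I * (r.1 : ℂ) / (L : ℂ)) * dft K w r * eker K r m := rfl

lemma D2_apply (K : ℕ) (L : ℝ) (w : GridFn K) (m : Fin (2*K+1) × Fin (2*K+1)) :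
    D2 K L w m = ∑ r ∈ Finset.Icc (-(K : ℤ)) K ×ˢ Finset.Icc (-(K : ℤ)) K,
      (2 * Real.pi * Complex.I * (r.2 : ℂ) / (L : ℂ)) * dft K w r * eker K r m := rfl

lemma dft_lin (K : ℕ) (c t : ℂ) (u w : GridFn K) (r : ℤ × ℤ) :
    dft K (fun m => c * u m + t * w m) r = c * dft K u r + t * dft K w r := by
  simp only [dft, add_mul, Finset.sum_add_distrib, mul_assoc, ← Finset.mul_sum]
  ring

lemma specOp_lin (K : ℕ) (L : ℝ) (α : ℤ) (c t : ℂ) (u w : GridFn K)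
    (m : Fin (2*K+1) × Fin (2*K+1)) :
    specOp K L α (fun m' => c * u m' + t * w m') m
      = c * specOp K L α u m + t * specOp K L α w m := by
  simp only [specOp_apply, dft_lin, mul_add, add_mul, Finset.sum_add_distrib, Finset.mul_sum]
  congr 1 <;> refine Finset.sum_congr rfl fun r _ => by ring

lemma D1_lin (K : ℕ) (L : ℝ) (c t : ℂ) (u w : GridFn K) (m : Fin (2*K+1) × Fin (2*K+1)) :
    D1 K L (fun m' => c * u m' + t * w m') m = c * D1 K L u m + t * D1 K L w m := by
  simp only [D1_apply, dft_lin, mul_add, add_mul, Finset.sum_add_distrib, Finset.mul_sum]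
  congr 1 <;> refine Finset.sum_congr rfl fun r _ => by ring

lemma D2_lin (K : ℕ) (L : ℝ) (c t : ℂ) (u w : GridFn K) (m : Fin (2*K+1) × Fin (2*K+1)) :
    D2 K L (fun m' => c * u m' + t * w m') m = c * D2 K L u m + t * D2 K L w m := by
  simp only [D2_apply, dft_lin, mul_add, add_mul, Finset.sum_add_distrib, Finset.mul_sum]
  congr 1 <;> refine Finset.sum_congr rfl fun r _ => by ring

lemma lapN_lin (K : ℕ) (L : ℝ) (c t : ℂ) (u w : GridFn K) (m : Fin (2*K+1) × Fin (2*K+1)) :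
    lapN K L (fun m' => c * u m' + t * w m') m = c * lapN K L u m + t * lapN K L w m := by
  simp only [lapN, specOp_lin]
  ring

lemma ipN_re (K : ℕ) (L : ℝ) (u v : GridFn K) :
    (ipN K L u v).re = (L / (2 * K + 1)) ^ 2 * ∑ m, (u m * (starRingEnd ℂ) (v m)).re := by
  rw [ipN, Complex.re_ofReal_mul, Complex.re_sum]

lemma ipN_specOp (K : ℕ) (L : ℝ) (α : ℤ) (p q : GridFn K) :
    ipN K L (specOp K L α p) q
      = (((L / (2 * K + 1)) ^ 2 : ℝ) : ℂ) * ((2 * (K:ℂ) + 1) ^ 2 *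
          ∑ r ∈ freqs K, (((lam L r : ℝ) : ℂ)) ^ α * dft K p r * (starRingEnd ℂ) (dft K q r)) := by
  rw [ipN]
  congr 1
  have h1 : ∀ m : Fin (2*K+1) × Fin (2*K+1), specOp K L α p m * (starRingEnd ℂ) (q m)
      = (∑ r ∈ freqs K, ((((lam L r : ℝ) : ℂ)) ^ α * dft K p r) * eker K r m) *
          (starRingEnd ℂ) (q m) := by
    intro m; rw [specOp_apply]
  rw [Finset.sum_congr rfl fun m _ => h1 m,
    sum_spec_mul_conj K (freqs K) (fun r => (((lam L r : ℝ) : ℂ)) ^ α * dft K p r) q]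

lemma ipN_specOp_symm_re (K : ℕ) (L : ℝ) (α : ℤ) (p q : GridFn K) :
    (ipN K L (specOp K L α p) q).re = (ipN K L (specOp K L α q) p).re := by
  have h : ipN K L (specOp K L α p) q = (starRingEnd ℂ) (ipN K L (specOp K L α q) p) := by
    rw [ipN_specOp, ipN_specOp, map_mul, map_mul, map_sum]
    congr 1
    · exact (Complex.conj_ofReal _).symm
    congr 1
    · simp [Complex.conj_ofNat]
    refine Finset.sum_congr rfl fun r _ => ?_
    rw [map_mul, map_mul, Complex.conj_conj, map_zpow₀, Complex.conj_ofReal]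
    ring
  rw [h, Complex.conj_re]

lemma zeroMem (K : ℕ) : ((0,0) : ℤ × ℤ) ∈ Finset.Icc (-(K:ℤ)) K ×ˢ Finset.Icc (-(K:ℤ)) K := by
  simp [Finset.mem_Icc]

lemma sum_grad_eq (K : ℕ) (L : ℝ) (v w : GridFn K) :
    ∑ m : Fin (2*K+1) × Fin (2*K+1),
        (D1 K L v m * (starRingEnd ℂ) (D1 K L w m) + D2 K L v m * (starRingEnd ℂ) (D2 K L w m))
      = (2 * (K:ℂ) + 1) ^ 2 *
          ∑ r ∈ freqs K, (((lam L r : ℝ) : ℂ)) * dft K v r * (starRingEnd ℂ) (dft K w r) := by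
  set P := Finset.Icc (-(K:ℤ)) K ×ˢ Finset.Icc (-(K:ℤ)) K with hP
  rw [Finset.sum_add_distrib]
  have h1 : ∑ m : Fin (2*K+1) × Fin (2*K+1), D1 K L v m * (starRingEnd ℂ) (D1 K L w m)
      = (2 * (K:ℂ) + 1) ^ 2 * ∑ r ∈ P,
          ((2 * Real.pi * Complex.I * (r.1 : ℂ) / (L : ℂ)) * dft K v r) *
            (starRingEnd ℂ) ((2 * Real.pi * Complex.I * (r.1 : ℂ) / (L : ℂ)) * dft K w r) := by
    simp only [D1_apply]
    exact sum_spec_mul_conj_spec K P (le_refl _)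
      (fun r => (2 * Real.pi * Complex.I * (r.1 : ℂ) / (L : ℂ)) * dft K v r)
      (fun r => (2 * Real.pi * Complex.I * (r.1 : ℂ) / (L : ℂ)) * dft K w r)
  have h2 : ∑ m : Fin (2*K+1) × Fin (2*K+1), D2 K L v m * (starRingEnd ℂ) (D2 K L w m)
      = (2 * (K:ℂ) + 1) ^ 2 * ∑ r ∈ P,
          ((2 * Real.pi * Complex.I * (r.2 : ℂ) / (L : ℂ)) * dft K v r) *
            (starRingEnd ℂ) ((2 * Real.pi * Complex.I * (r.2 : ℂ) / (L : ℂ)) * dft K w r) := by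
    simp only [D2_apply]
    exact sum_spec_mul_conj_spec K P (le_refl _)
      (fun r => (2 * Real.pi * Complex.I * (r.2 : ℂ) / (L : ℂ)) * dft K v r)
      (fun r => (2 * Real.pi * Complex.I * (r.2 : ℂ) / (L : ℂ)) * dft K w r)
  rw [h1, h2, ← mul_add, ← Finset.sum_add_distrib]
  congr 1
  have hco : ∀ x : ℂ, (starRingEnd ℂ) (2 * Real.pi * Complex.I * x / (L : ℂ))
      = -(2 * Real.pi * Complex.I * (starRingEnd ℂ) x / (L : ℂ)) := by
    intro x
    simp [map_mul, map_div₀, Complex.conj_I, Complex.conj_ofNat, Complex.conj_ofReal]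
    ring
  have key : ∀ r : ℤ × ℤ,
      ((2 * Real.pi * Complex.I * (r.1 : ℂ) / (L : ℂ)) * dft K v r) *
        (starRingEnd ℂ) ((2 * Real.pi * Complex.I * (r.1 : ℂ) / (L : ℂ)) * dft K w r) +
      ((2 * Real.pi * Complex.I * (r.2 : ℂ) / (L : ℂ)) * dft K v r) *
        (starRingEnd ℂ) ((2 * Real.pi * Complex.I * (r.2 : ℂ) / (L : ℂ)) * dft K w r)
      = (((lam L r : ℝ) : ℂ)) * dft K v r * (starRingEnd ℂ) (dft K w r) := by
    intro r
    rw [map_mul, map_mul, hco, hco]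
    have hlam : (((lam L r : ℝ) : ℂ)) =
        4 * (Real.pi : ℂ) ^ 2 * ((r.1 : ℂ) ^ 2 + (r.2 : ℂ) ^ 2) / (L : ℂ) ^ 2 := by
      rw [lam]; push_cast; ring
    rw [hlam]
    simp only [map_intCast]
    linear_combination (-(4 * (Real.pi:ℂ)^2 * ((r.1:ℂ)^2+(r.2:ℂ)^2) / (L:ℂ)^2)
      * dft K v r * (starRingEnd ℂ) (dft K w r)) * Complex.I_sq
  rw [Finset.sum_congr rfl fun r _ => key r]
  have hz : (((lam L ((0,0) : ℤ × ℤ) : ℝ) : ℂ)) * dft K v (0,0) * (starRingEnd ℂ) (dft K w (0,0)) = 0 := by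
    simp [lam]
  rw [show freqs K = P.erase (0,0) from rfl]
  exact (Finset.sum_erase (s := P)
    (f := fun r => (((lam L r : ℝ) : ℂ)) * dft K v r * (starRingEnd ℂ) (dft K w r)) hz).symm

lemma sum_lap_eq (K : ℕ) (L : ℝ) (v w : GridFn K) :
    ∑ m : Fin (2*K+1) × Fin (2*K+1), lapN K L v m * (starRingEnd ℂ) (lapN K L w m)
      = (2 * (K:ℂ) + 1) ^ 2 *
          ∑ r ∈ freqs K, (((lam L r : ℝ) : ℂ)) ^ (2:ℤ) * dft K v r * (starRingEnd ℂ) (dft K w r) := by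
  have h0 : ∀ m : Fin (2*K+1) × Fin (2*K+1), lapN K L v m * (starRingEnd ℂ) (lapN K L w m)
      = specOp K L 1 v m * (starRingEnd ℂ) (specOp K L 1 w m) := by
    intro m; rw [lapN, lapN, map_neg, neg_mul_neg]
  rw [Finset.sum_congr rfl fun m _ => h0 m]
  have hsub : freqs K ⊆ Finset.Icc (-(K:ℤ)) K ×ˢ Finset.Icc (-(K:ℤ)) K := Finset.erase_subset _ _
  have h1 := sum_spec_mul_conj_spec K (freqs K) hsub
      (fun r => (((lam L r : ℝ) : ℂ)) ^ (1:ℤ) * dft K v r)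
      (fun r => (((lam L r : ℝ) : ℂ)) ^ (1:ℤ) * dft K w r)
  simp only [specOp_apply]
  rw [h1]
  congr 1
  refine Finset.sum_congr rfl fun r _ => ?_
  rw [map_mul, map_zpow₀, Complex.conj_ofReal]
  rw [zpow_one, show ((2:ℤ)) = ((2:ℕ) : ℤ) from rfl, zpow_natCast]
  ring

lemma hasDerivAt_affine (p q : ℝ) : HasDerivAt (fun s : ℝ => p + s * q) q 0 := by
  simpa using ((hasDerivAt_id (0:ℝ)).mul_const q).const_add p

lemma hasDerivAt_sq_abs (x y : ℂ) :
    HasDerivAt (fun s : ℝ => ‖x + (s:ℂ) * y‖ ^ 2)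
      (2 * (x * (starRingEnd ℂ) y).re) 0 := by
  have key : ∀ s : ℝ, ‖x + (s:ℂ) * y‖ ^ 2
      = Complex.normSq x + s * (2 * (x * (starRingEnd ℂ) y).re) + s * s * Complex.normSq y := by
    intro s
    rw [Complex.sq_norm]
    simp [Complex.normSq_apply, Complex.mul_re, Complex.mul_im, Complex.add_re, Complex.add_im,
      Complex.conj_re, Complex.conj_im, Complex.ofReal_re, Complex.ofReal_im]
    ring
  simp only [key]
  have h1 : HasDerivAt (fun s : ℝ => Complex.normSq x + s * (2 * (x * (starRingEnd ℂ) y).re)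
      + s * s * Complex.normSq y)
      ((1:ℝ) * (2 * (x * (starRingEnd ℂ) y).re) + ((1 : ℝ) * 0 + 0 * 1) * Complex.normSq y) 0 := by
    exact (((hasDerivAt_id (0:ℝ)).mul_const _).const_add _).add
      (((hasDerivAt_id (0:ℝ)).mul (hasDerivAt_id (0:ℝ))).mul_const _)
  simpa using h1

lemma hasDerivAt_quartic (p q : ℝ) :
    HasDerivAt (fun s : ℝ => (1/4) * (p + s * q) ^ 4) (p ^ 3 * q) 0 := by
  refine (((hasDerivAt_affine p q).pow 4).const_mul (1/4 : ℝ)).congr_deriv ?_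
  push_cast
  ring

lemma hasDerivAt_quadratic (c p q : ℝ) :
    HasDerivAt (fun s : ℝ => c * (p + s * q) ^ 2) (2 * c * p * q) 0 := by
  refine (((hasDerivAt_affine p q).pow 2).const_mul c).congr_deriv ?_
  push_cast
  ring

lemma hasDerivAt_EN (K : ℕ) (L ε : ℝ) (v w : GridFn K) :
    HasDerivAt (fun s : ℝ => EN K L ε (fun m => v m + (s:ℂ) * w m))
      ((L / (2 * K + 1)) ^ 2 * ∑ m : Fin (2*K+1) × Fin (2*K+1),
        ((v m).re ^ 3 * (w m).re
          + 2 * ((1 - ε)/2) * (v m).re * (w m).re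
          - (2 * (D1 K L v m * (starRingEnd ℂ) (D1 K L w m)).re
             + 2 * (D2 K L v m * (starRingEnd ℂ) (D2 K L w m)).re)
          + (1/2) * (2 * (lapN K L v m * (starRingEnd ℂ) (lapN K L w m)).re))) 0 := by
  have hD1 : ∀ (s : ℝ) m, D1 K L (fun m' => v m' + (s:ℂ) * w m') m
      = D1 K L v m + (s:ℂ) * D1 K L w m := fun s m => by
    simpa using D1_lin K L 1 (s:ℂ) v w m
  have hD2 : ∀ (s : ℝ) m, D2 K L (fun m' => v m' + (s:ℂ) * w m') m
      = D2 K L v m + (s:ℂ) * D2 K L w m := fun s m => by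
    simpa using D2_lin K L 1 (s:ℂ) v w m
  have hLap : ∀ (s : ℝ) m, lapN K L (fun m' => v m' + (s:ℂ) * w m') m
      = lapN K L v m + (s:ℂ) * lapN K L w m := fun s m => by
    simpa using lapN_lin K L 1 (s:ℂ) v w m
  have heq : ∀ s : ℝ, EN K L ε (fun m => v m + (s:ℂ) * w m)
      = (L / (2 * K + 1)) ^ 2 * ∑ m : Fin (2*K+1) × Fin (2*K+1),
          ((1/4) * ((v m).re + s * (w m).re) ^ 4
            + ((1 - ε)/2) * ((v m).re + s * (w m).re) ^ 2
            - (‖D1 K L v m + (s:ℂ) * D1 K L w m‖ ^ 2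
               + ‖D2 K L v m + (s:ℂ) * D2 K L w m‖ ^ 2)
            + (1/2) * ‖lapN K L v m + (s:ℂ) * lapN K L w m‖ ^ 2) := by
    intro s
    rw [EN]
    congr 1
    refine Finset.sum_congr rfl fun m _ => ?_
    rw [gradSqN, hD1, hD2, hLap, Complex.add_re, Complex.re_ofReal_mul]
  have H : HasDerivAt (fun s : ℝ => (L / (2 * K + 1)) ^ 2 *
      ∑ m : Fin (2*K+1) × Fin (2*K+1),
          ((1/4) * ((v m).re + s * (w m).re) ^ 4
            + ((1 - ε)/2) * ((v m).re + s * (w m).re) ^ 2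
            - (‖D1 K L v m + (s:ℂ) * D1 K L w m‖ ^ 2
               + ‖D2 K L v m + (s:ℂ) * D2 K L w m‖ ^ 2)
            + (1/2) * ‖lapN K L v m + (s:ℂ) * lapN K L w m‖ ^ 2))
      ((L / (2 * K + 1)) ^ 2 * ∑ m : Fin (2*K+1) × Fin (2*K+1),
        ((v m).re ^ 3 * (w m).re
          + 2 * ((1 - ε)/2) * (v m).re * (w m).re
          - (2 * (D1 K L v m * (starRingEnd ℂ) (D1 K L w m)).re
             + 2 * (D2 K L v m * (starRingEnd ℂ) (D2 K L w m)).re)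
          + (1/2) * (2 * (lapN K L v m * (starRingEnd ℂ) (lapN K L w m)).re))) 0 := by
    refine HasDerivAt.const_mul _ (HasDerivAt.fun_sum fun m _ => ?_)
    exact (((hasDerivAt_quartic (v m).re (w m).re).add
        (hasDerivAt_quadratic ((1 - ε)/2) (v m).re (w m).re)).sub
        ((hasDerivAt_sq_abs (D1 K L v m) (D1 K L w m)).add
          (hasDerivAt_sq_abs (D2 K L v m) (D2 K L w m)))).add
      ((hasDerivAt_sq_abs (lapN K L v m) (lapN K L w m)).const_mul (1/2))
  exact H.congr_of_eventuallyEq (Filter.Eventually.of_forall heq)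

lemma ipN_bilin (K : ℕ) (L : ℝ) (s : ℝ) (u1 u2 v1 v2 : GridFn K) :
    ipN K L (fun m => u1 m + (s:ℂ) * u2 m) (fun m => v1 m + (s:ℂ) * v2 m)
      = ipN K L u1 v1 + (s:ℂ) * (ipN K L u2 v1 + ipN K L u1 v2)
        + (s:ℂ) ^ 2 * ipN K L u2 v2 := by
  have hpt : ∀ m : Fin (2*K+1) × Fin (2*K+1),
      (u1 m + (s:ℂ) * u2 m) * (starRingEnd ℂ) (v1 m + (s:ℂ) * v2 m)
        = u1 m * (starRingEnd ℂ) (v1 m)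
          + (s:ℂ) * (u2 m * (starRingEnd ℂ) (v1 m) + u1 m * (starRingEnd ℂ) (v2 m))
          + (s:ℂ) ^ 2 * (u2 m * (starRingEnd ℂ) (v2 m)) := by
    intro m
    rw [map_add, map_mul, Complex.conj_ofReal]
    ring
  simp only [ipN]
  rw [Finset.sum_congr rfl fun m _ => hpt m]
  simp only [Finset.sum_add_distrib, ← Finset.mul_sum]
  ring

lemma hasDerivAt_negNorm (K : ℕ) (L : ℝ) (p q : GridFn K) :
    HasDerivAt (fun s : ℝ => negNormSq K L (fun m => p m + (s:ℂ) * q m))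
      ((ipN K L (invNegLapN K L q) p).re + (ipN K L (invNegLapN K L p) q).re) 0 := by
  have hA : ∀ (s : ℝ) m, invNegLapN K L (fun m' => p m' + (s:ℂ) * q m') m
      = invNegLapN K L p m + (s:ℂ) * invNegLapN K L q m := fun s m => by
    simpa [invNegLapN] using specOp_lin K L (-1) 1 (s:ℂ) p q m
  have heq : ∀ s : ℝ, negNormSq K L (fun m => p m + (s:ℂ) * q m)
      = (ipN K L (invNegLapN K L p) p).re
        + s * ((ipN K L (invNegLapN K L q) p).re + (ipN K L (invNegLapN K L p) q).re)
        + s * s * (ipN K L (invNegLapN K L q) q).re := by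
    intro s
    rw [negNormSq]
    rw [show invNegLapN K L (fun m => p m + (s:ℂ) * q m)
        = fun m => invNegLapN K L p m + (s:ℂ) * invNegLapN K L q m from funext (hA s)]
    rw [ipN_bilin]
    rw [Complex.add_re, Complex.add_re, Complex.re_ofReal_mul, sq,
      ← Complex.ofReal_mul, Complex.re_ofReal_mul, Complex.add_re]
  have H : HasDerivAt (fun s : ℝ =>
      (ipN K L (invNegLapN K L p) p).re
        + s * ((ipN K L (invNegLapN K L q) p).re + (ipN K L (invNegLapN K L p) q).re)
        + s * s * (ipN K L (invNegLapN K L q) q).re)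
      ((1:ℝ) * ((ipN K L (invNegLapN K L q) p).re + (ipN K L (invNegLapN K L p) q).re)
        + ((1:ℝ) * 0 + 0 * 1) * (ipN K L (invNegLapN K L q) q).re) 0 := by
    exact (((hasDerivAt_id (0:ℝ)).mul_const _).const_add _).add
      (((hasDerivAt_id (0:ℝ)).mul (hasDerivAt_id (0:ℝ))).mul_const _)
  have H2 := H.congr_of_eventuallyEq (Filter.Eventually.of_forall heq)
  simpa using H2

lemma ipN_smul_left (K : ℕ) (L : ℝ) (c : ℂ) (u v : GridFn K) :
    ipN K L (fun m => c * u m) v = c * ipN K L u v := by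
  simp only [ipN, mul_assoc, ← Finset.mul_sum]
  ring

lemma ipN_smul_right (K : ℕ) (L : ℝ) (c : ℝ) (u v : GridFn K) :
    ipN K L u (fun m => (c:ℂ) * v m) = (c:ℂ) * ipN K L u v := by
  simp only [ipN, map_mul, Complex.conj_ofReal]
  rw [show ∀ S : Finset (Fin (2*K+1) × Fin (2*K+1)), ∑ m ∈ S, u m * ((c:ℂ) * (starRingEnd ℂ) (v m))
    = (c:ℂ) * ∑ m ∈ S, u m * (starRingEnd ℂ) (v m) from fun S => by
      rw [Finset.mul_sum]; exact Finset.sum_congr rfl fun m _ => by ring]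
  ring

lemma ipN_neg_left (K : ℕ) (L : ℝ) (u v : GridFn K) :
    ipN K L (fun m => -(u m)) v = -ipN K L u v := by
  simp only [ipN, neg_mul, Finset.sum_neg_distrib, mul_neg]

lemma ipN_add_left (K : ℕ) (L : ℝ) (u1 u2 v : GridFn K) :
    ipN K L (fun m => u1 m + u2 m) v = ipN K L u1 v + ipN K L u2 v := by
  simp only [ipN, add_mul, Finset.sum_add_distrib, mul_add]

lemma re_two_mul (z : ℂ) : ((2:ℂ) * z).re = 2 * z.re := by
  simp [Complex.mul_re]

lemma derivEq (K : ℕ) (L ε M a : ℝ) (hM : M ≠ 0) (ha : a ≠ 0)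
    (f v w : GridFn K) (hv : RealValued v) (hw : RealValued w) :
    (1 / (2*M*a)) * ((ipN K L (invNegLapN K L (fun m => (a:ℂ) * w m)) f).re
        + (ipN K L (invNegLapN K L f) (fun m => (a:ℂ) * w m)).re)
      + (L / (2 * K + 1)) ^ 2 * ∑ m : Fin (2*K+1) × Fin (2*K+1),
        ((v m).re ^ 3 * (w m).re
          + 2 * ((1 - ε)/2) * (v m).re * (w m).re
          - (2 * (D1 K L v m * (starRingEnd ℂ) (D1 K L w m)).re
             + 2 * (D2 K L v m * (starRingEnd ℂ) (D2 K L w m)).re)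
          + (1/2) * (2 * (lapN K L v m * (starRingEnd ℂ) (lapN K L w m)).re))
    = (ipN K L (fun m => (1 / (M:ℂ)) * invNegLapN K L f m + muN K L ε v m) w).re := by
  have hvm : ∀ m, v m = (((v m).re : ℝ) : ℂ) := fun m => by
    apply Complex.ext <;> simp [hv m]
  have hwm : ∀ m, w m = (((w m).re : ℝ) : ℂ) := fun m => by
    apply Complex.ext <;> simp [hw m]
  -- Part A : the nonlocal term
  have hAs : invNegLapN K L (fun m => (a:ℂ) * w m) = fun m => (a:ℂ) * invNegLapN K L w m :=
    funext fun m => by simpa [invNegLapN] using specOp_lin K L (-1) (a:ℂ) 0 w w m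
  have hsymm : (ipN K L (invNegLapN K L w) f).re = (ipN K L (invNegLapN K L f) w).re :=
    ipN_specOp_symm_re K L (-1) w f
  have hA : (1 / (2*M*a)) * ((ipN K L (invNegLapN K L (fun m => (a:ℂ) * w m)) f).re
        + (ipN K L (invNegLapN K L f) (fun m => (a:ℂ) * w m)).re)
      = (1/M) * (ipN K L (invNegLapN K L f) w).re := by
    rw [hAs, ipN_smul_left, ipN_smul_right, Complex.re_ofReal_mul, Complex.re_ofReal_mul,
      hsymm]
    field_simp
    ring
  rw [hA]
  -- Part B : expand the right-hand side
  have hTsplit : ipN K L (fun m => (1 / (M:ℂ)) * invNegLapN K L f m + muN K L ε v m) w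
      = (1 / (M:ℂ)) * ipN K L (invNegLapN K L f) w
        + (ipN K L (fun m => (v m)^3) w
          + (((1 - ε : ℝ):ℂ) * ipN K L v w
            + ((2:ℂ) * ipN K L (lapN K L v) w + ipN K L (bilapN K L v) w))) := by
    rw [ipN_add_left K L (fun m => (1 / (M:ℂ)) * invNegLapN K L f m) (fun m => muN K L ε v m) w,
      ipN_smul_left]
    congr 1
    rw [show (fun m => muN K L ε v m) = (fun m => (v m)^3
        + (((1 - ε : ℝ):ℂ) * v m + ((2:ℂ) * lapN K L v m + bilapN K L v m))) from
      funext fun m => by rw [muN]; ring]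
    rw [ipN_add_left K L (fun m => (v m)^3)
      (fun m => ((1 - ε : ℝ):ℂ) * v m + ((2:ℂ) * lapN K L v m + bilapN K L v m)) w]
    congr 1
    rw [ipN_add_left K L (fun m => ((1 - ε : ℝ):ℂ) * v m)
      (fun m => (2:ℂ) * lapN K L v m + bilapN K L v m) w, ipN_smul_left]
    congr 1
    rw [ipN_add_left K L (fun m => (2:ℂ) * lapN K L v m) (fun m => bilapN K L v m) w,
      ipN_smul_left]
  rw [hTsplit]
  simp only [Complex.add_re, re_two_mul, Complex.re_ofReal_mul]
  have hM1 : ((1 / (M:ℂ)) * ipN K L (invNegLapN K L f) w).re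
      = (1/M) * (ipN K L (invNegLapN K L f) w).re := by
    rw [show (1 / (M:ℂ)) = (((1/M : ℝ)):ℂ) by push_cast; ring, Complex.re_ofReal_mul]
  rw [hM1]
  -- Part C : pointwise cubic and linear terms
  have hC1 : (ipN K L (fun m => (v m)^3) w).re
      = (L / (2 * K + 1)) ^ 2 * ∑ m, (v m).re ^ 3 * (w m).re := by
    rw [ipN_re]
    congr 1
    refine Finset.sum_congr rfl fun m _ => ?_
    rw [hvm m, hwm m]
    simp [Complex.conj_ofReal, ← Complex.ofReal_pow, ← Complex.ofReal_mul]
  have hC2 : (ipN K L v w).re = (L / (2 * K + 1)) ^ 2 * ∑ m, (v m).re * (w m).re := by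
    rw [ipN_re]
    congr 1
    refine Finset.sum_congr rfl fun m _ => ?_
    rw [hvm m, hwm m]
    simp [Complex.conj_ofReal, ← Complex.ofReal_mul]
  -- Part C2 : gradient term
  have hgrad : ∑ m : Fin (2*K+1) × Fin (2*K+1),
      (2 * (D1 K L v m * (starRingEnd ℂ) (D1 K L w m)).re
        + 2 * (D2 K L v m * (starRingEnd ℂ) (D2 K L w m)).re)
      = 2 * ((2 * (K:ℂ) + 1) ^ 2 *
          ∑ r ∈ freqs K, (((lam L r : ℝ) : ℂ)) * dft K v r * (starRingEnd ℂ) (dft K w r)).re := by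
    rw [← sum_grad_eq K L v w, Complex.re_sum, Finset.mul_sum]
    exact Finset.sum_congr rfl fun m _ => by rw [Complex.add_re]; ring
  have hlapip : (ipN K L (lapN K L v) w).re
      = -((L / (2 * K + 1)) ^ 2 * ((2 * (K:ℂ) + 1) ^ 2 *
          ∑ r ∈ freqs K, (((lam L r : ℝ) : ℂ)) * dft K v r * (starRingEnd ℂ) (dft K w r)).re) := by
    have h1 : ipN K L (lapN K L v) w = -ipN K L (specOp K L 1 v) w :=
      ipN_neg_left K L (specOp K L 1 v) w
    rw [h1, ipN_specOp, Complex.neg_re, Complex.re_ofReal_mul]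
    have hz : ∀ r : ℤ × ℤ, (((lam L r : ℝ):ℂ)) ^ (1:ℤ) * dft K v r * (starRingEnd ℂ) (dft K w r)
        = (((lam L r : ℝ):ℂ)) * dft K v r * (starRingEnd ℂ) (dft K w r) := fun r => by
      rw [zpow_one]
    rw [Finset.sum_congr rfl fun r _ => hz r]
  -- Part C3 : biharmonic term
  have hlap2 : ∑ m : Fin (2*K+1) × Fin (2*K+1),
      (1/2) * (2 * (lapN K L v m * (starRingEnd ℂ) (lapN K L w m)).re)
      = ((2 * (K:ℂ) + 1) ^ 2 * ∑ r ∈ freqs K,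
          (((lam L r : ℝ) : ℂ)) ^ (2:ℤ) * dft K v r * (starRingEnd ℂ) (dft K w r)).re := by
    rw [← sum_lap_eq K L v w, Complex.re_sum]
    exact Finset.sum_congr rfl fun m _ => by ring
  have hbilap : (ipN K L (bilapN K L v) w).re
      = (L / (2 * K + 1)) ^ 2 * ((2 * (K:ℂ) + 1) ^ 2 * ∑ r ∈ freqs K,
          (((lam L r : ℝ) : ℂ)) ^ (2:ℤ) * dft K v r * (starRingEnd ℂ) (dft K w r)).re := by
    rw [show bilapN K L v = specOp K L 2 v from rfl, ipN_specOp, Complex.re_ofReal_mul]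
  -- final assembly
  rw [hC1, hC2, hlapip, hbilap]
  rw [show ∀ S : Finset (Fin (2*K+1) × Fin (2*K+1)), ∀ F G H J : (Fin (2*K+1) × Fin (2*K+1)) → ℝ,
      ∑ m ∈ S, (F m + G m - H m + J m) = ∑ m ∈ S, F m + ∑ m ∈ S, G m - ∑ m ∈ S, H m + ∑ m ∈ S, J m from
    fun S F G H J => by rw [Finset.sum_add_distrib, Finset.sum_sub_distrib, Finset.sum_add_distrib]]
  rw [hgrad, hlap2]
  have : ∑ m : Fin (2*K+1) × Fin (2*K+1), 2 * ((1 - ε)/2) * (v m).re * (w m).re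
      = (1 - ε) * ∑ m, (v m).re * (w m).re := by
    rw [Finset.mul_sum]
    exact Finset.sum_congr rfl fun m _ => by ring
  rw [this]
  ring

/-- Gâteaux derivative of the BDF2–PFC objective: if `f = a v + b u¹ + c u⁰` has zero mean,
then for every real-valued grid function `w`, `s ↦ G_N(v + s w)` is differentiable at `0` with
derivative `Re(((1/M)(−Δ_N)⁻¹f + μ_N(v), w)_N)`. -/
theorem GN_gateaux_derivative
    (K : ℕ) (hK : 1 ≤ K) (L : ℝ) (hL : 0 < L) (ε : ℝ) (M : ℝ) (hM : 0 < M)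
    (a : ℝ) (ha : 0 < a) (b c : ℝ) (u1 u0 v : GridFn K)
    (hu1 : RealValued u1) (hu0 : RealValued u0) (hv : RealValued v)
    (f : GridFn K)
    (hf : f = fun m => (a : ℂ) * v m + (b : ℂ) * u1 m + (c : ℂ) * u0 m)
    (hmean : ZeroMean f) :
    ∀ w : GridFn K, RealValued w →
      HasDerivAt (fun s : ℝ => GN K L ε M a b c u1 u0 (fun m => v m + (s : ℂ) * w m))
        ((ipN K L
          (fun m => (1 / (M : ℂ)) * invNegLapN K L f m + muN K L ε v m) w).re) 0 := by
  intro w hw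
  have hGN : ∀ s : ℝ, GN K L ε M a b c u1 u0 (fun m => v m + (s:ℂ) * w m)
      = (1 / (2 * M * a)) * negNormSq K L (fun m => f m + (s:ℂ) * ((a:ℂ) * w m))
        + EN K L ε (fun m => v m + (s:ℂ) * w m) := by
    intro s
    rw [GN, show (fun m => (a:ℂ) * (v m + (s:ℂ) * w m) + (b:ℂ) * u1 m + (c:ℂ) * u0 m)
        = (fun m => f m + (s:ℂ) * ((a:ℂ) * w m)) from funext fun m => by rw [hf]; ring]
  have H1 := (hasDerivAt_negNorm K L f (fun m => (a:ℂ) * w m)).const_mul (1 / (2 * M * a))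
  have H2 := hasDerivAt_EN K L ε v w
  have H := (H1.add H2).congr_of_eventuallyEq (Filter.Eventually.of_forall hGN)
  have heq := derivEq K L ε M a hM.ne' ha.ne' f v w hv hw
  rw [← heq]
  exact H
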